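/- Let V ∈ ℝ^{p×k} have rank k, let v ∈ ℝ^p with ‖v‖₂ = 1, let 0 ≤ ε ≤ 1/2, and let S : ℝ^p → ℝ^s be a linear map that is an ε-isometry on the subspace col(V) + span{v}. Let U ∈ ℝ^{p×k} have orthonormal columns with col(U) = col(V), and let U_S ∈ ℝ^{s×k} have orthonormal columns with col(U_S) = col(S V), where S V is the matrix whose columns are S applied to the columns of V. Then | ‖U_Sᵀ (S v)‖₂ − ‖Uᵀ v‖₂ | ≤ 9ε. -/

import Mathlib

open Matrix RealInnerProductSpace

private theorem aux_mul {m n l : ℕ} (M : Matrix (Fin m) (Fin n) ℝ)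
    (N : Matrix (Fin n) (Fin l) ℝ) :
    Matrix.toEuclideanLin (M * N) = (Matrix.toEuclideanLin M).comp (Matrix.toEuclideanLin N) := by
  ext x
  simp [Matrix.toEuclideanLin_apply, Matrix.mulVec_mulVec]

private theorem aux_one {n : ℕ} :
    Matrix.toEuclideanLin (1 : Matrix (Fin n) (Fin n) ℝ) = LinearMap.id := by
  ext x
  simp [Matrix.toEuclideanLin_apply]

private theorem aux_SV {p s k : ℕ} (V : Matrix (Fin p) (Fin k) ℝ)
    (S : EuclideanSpace ℝ (Fin p) →ₗ[ℝ] EuclideanSpace ℝ (Fin s))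
    (SV : Matrix (Fin s) (Fin k) ℝ)
    (hSV : SV = Matrix.of fun i j =>
      S ((EuclideanSpace.equiv (Fin p) ℝ).symm fun r => V r j) i) :
    Matrix.toEuclideanLin SV = S.comp (Matrix.toEuclideanLin V) := by
  refine LinearMap.ext fun x => ?_
  have hVx : Matrix.toEuclideanLin V x
      = ∑ j, x j • ((EuclideanSpace.equiv (Fin p) ℝ).symm fun r => V r j) := by
    ext r
    have := map_sum (EuclideanSpace.projₗ (𝕜 := ℝ) r)
      (fun j => x j • ((EuclideanSpace.equiv (Fin p) ℝ).symm fun r => V r j)) Finset.univ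
    simp only [PiLp.projₗ_apply] at this
    rw [Matrix.toEuclideanLin_apply]
    show (V *ᵥ _) r = _
    rw [show ((∑ j, x j • ((EuclideanSpace.equiv (Fin p) ℝ).symm fun r => V r j)) r) = _
      from this]
    simp [Matrix.mulVec, dotProduct, EuclideanSpace.equiv, mul_comm]
  ext i
  rw [LinearMap.comp_apply, hVx, map_sum]
  have := map_sum (EuclideanSpace.projₗ (𝕜 := ℝ) i)
    (fun j => S (x j • ((EuclideanSpace.equiv (Fin p) ℝ).symm fun r => V r j))) Finset.univ
  simp only [PiLp.projₗ_apply] at this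
  rw [show ((∑ j, S (x j • ((EuclideanSpace.equiv (Fin p) ℝ).symm fun r => V r j))) i) = _
    from this]
  rw [Matrix.toEuclideanLin_apply]
  show (SV *ᵥ _) i = _
  simp [hSV, Matrix.mulVec, dotProduct, mul_comm]

set_option maxHeartbeats 2000000 in
/-- **Lemma 2 (Orthogonalizing the sketch), deterministic form.**
Let `V ∈ ℝ^{p×k}` have rank `k`, let `v` be a unit vector, and let `S` be an
`ε`-isometry on `col(V) + span{v}` with `0 ≤ ε ≤ 1/2`. If `U` is an orthonormal
basis of `col(V)` and `U_S` is an orthonormal basis of `col(SV)`, then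
`| ‖U_Sᵀ (S v)‖₂ − ‖Uᵀ v‖₂ | ≤ 9ε`. -/
theorem orthogonalizing_the_sketch
    {p s k : ℕ} (V : Matrix (Fin p) (Fin k) ℝ) (hV : V.rank = k)
    (v : EuclideanSpace ℝ (Fin p)) (hv : ‖v‖ = 1)
    (ε : ℝ) (hε0 : 0 ≤ ε) (hε1 : ε ≤ 1 / 2)
    (S : EuclideanSpace ℝ (Fin p) →ₗ[ℝ] EuclideanSpace ℝ (Fin s))
    (hS : ∀ w ∈ LinearMap.range (Matrix.toEuclideanLin V)
        ⊔ Submodule.span ℝ {v},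
      (1 - ε) * ‖w‖ ≤ ‖S w‖ ∧ ‖S w‖ ≤ (1 + ε) * ‖w‖)
    (U : Matrix (Fin p) (Fin k) ℝ) (hUorth : Uᵀ * U = 1)
    (hUcol : LinearMap.range (Matrix.toEuclideanLin U)
      = LinearMap.range (Matrix.toEuclideanLin V))
    (SV : Matrix (Fin s) (Fin k) ℝ)
    (hSV : SV = Matrix.of fun i j =>
      S ((EuclideanSpace.equiv (Fin p) ℝ).symm fun r => V r j) i)
    (US : Matrix (Fin s) (Fin k) ℝ) (hUSorth : USᵀ * US = 1)
    (hUScol : LinearMap.range (Matrix.toEuclideanLin US)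
      = LinearMap.range (Matrix.toEuclideanLin SV)) :
    abs (‖Matrix.toEuclideanLin USᵀ (S v)‖ - ‖Matrix.toEuclideanLin Uᵀ v‖) ≤ 9 * ε := by
  classical
  set Wsp := LinearMap.range (Matrix.toEuclideanLin V) ⊔ Submodule.span ℝ {v} with hWsp
  set A := Matrix.toEuclideanLin U with hA
  set B := Matrix.toEuclideanLin US with hB
  have hAadj : Matrix.toEuclideanLin Uᵀ = LinearMap.adjoint A := by
    rw [← Matrix.conjTranspose_eq_transpose_of_trivial,
      Matrix.toEuclideanLin_conjTranspose_eq_adjoint]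
  have hBadj : Matrix.toEuclideanLin USᵀ = LinearMap.adjoint B := by
    rw [← Matrix.conjTranspose_eq_transpose_of_trivial,
      Matrix.toEuclideanLin_conjTranspose_eq_adjoint]
  have hAA : (LinearMap.adjoint A).comp A = LinearMap.id := by
    rw [← hAadj, hA, ← aux_mul, hUorth, aux_one]
  have hBB : (LinearMap.adjoint B).comp B = LinearMap.id := by
    rw [← hBadj, hB, ← aux_mul, hUSorth, aux_one]
  have hAAx : ∀ z, LinearMap.adjoint A (A z) = z := fun z => by
    simpa using LinearMap.congr_fun hAA z
  have hBBx : ∀ z, LinearMap.adjoint B (B z) = z := fun z => by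
    simpa using LinearMap.congr_fun hBB z
  have hAinner : ∀ z, ⟪A z, A z⟫ = ⟪z, z⟫ := fun z => by
    rw [← LinearMap.adjoint_inner_left, hAAx]
  have hBinner : ∀ z, ⟪B z, B z⟫ = ⟪z, z⟫ := fun z => by
    rw [← LinearMap.adjoint_inner_left, hBBx]
  have hAnorm : ∀ z, ‖A z‖ = ‖z‖ := by
    intro z
    have h1 : ‖A z‖ ^ 2 = ‖z‖ ^ 2 := by
      rw [← real_inner_self_eq_norm_sq, ← real_inner_self_eq_norm_sq, hAinner]
    calc ‖A z‖ = Real.sqrt (‖A z‖ ^ 2) := (Real.sqrt_sq (norm_nonneg _)).symm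
      _ = Real.sqrt (‖z‖ ^ 2) := by rw [h1]
      _ = ‖z‖ := Real.sqrt_sq (norm_nonneg _)
  have hBnorm : ∀ z, ‖B z‖ = ‖z‖ := by
    intro z
    have h1 : ‖B z‖ ^ 2 = ‖z‖ ^ 2 := by
      rw [← real_inner_self_eq_norm_sq, ← real_inner_self_eq_norm_sq, hBinner]
    calc ‖B z‖ = Real.sqrt (‖B z‖ ^ 2) := (Real.sqrt_sq (norm_nonneg _)).symm
      _ = Real.sqrt (‖z‖ ^ 2) := by rw [h1]
      _ = ‖z‖ := Real.sqrt_sq (norm_nonneg _)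
  set u := A (LinearMap.adjoint A v) with hu
  set w := v - u with hw
  set q := B (LinearMap.adjoint B (S v)) with hq
  clear_value Wsp A B u w q
  have hnormU : ‖Matrix.toEuclideanLin Uᵀ v‖ = ‖u‖ := by
    rw [hAadj, hu, hAnorm]
  have hnormq : ‖Matrix.toEuclideanLin USᵀ (S v)‖ = ‖q‖ := by
    rw [hBadj, hq, hBnorm]
  -- orthogonality of w to range A
  have hwperp : ∀ y ∈ LinearMap.range A, ⟪w, y⟫ = 0 := by
    rintro _ ⟨z, rfl⟩
    rw [hw, inner_sub_left]
    have h1 : ⟪v, A z⟫ = ⟪LinearMap.adjoint A v, z⟫ :=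
      (LinearMap.adjoint_inner_left A z v).symm
    have h2 : ⟪u, A z⟫ = ⟪LinearMap.adjoint A v, z⟫ := by
      rw [hu, ← LinearMap.adjoint_inner_left, hAAx]
    rw [h1, h2]; ring
  have hrperp : ∀ y ∈ LinearMap.range B, ⟪S v - q, y⟫ = 0 := by
    rintro _ ⟨z, rfl⟩
    rw [inner_sub_left]
    have h1 : ⟪S v, B z⟫ = ⟪LinearMap.adjoint B (S v), z⟫ :=
      (LinearMap.adjoint_inner_left B z (S v)).symm
    have h2 : ⟪q, B z⟫ = ⟪LinearMap.adjoint B (S v), z⟫ := by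
      rw [hq, ← LinearMap.adjoint_inner_left, hBBx]
    rw [h1, h2]; ring
  -- memberships
  have hvW : v ∈ Wsp := by
    rw [hWsp]; exact Submodule.mem_sup_right (Submodule.mem_span_singleton_self v)
  have huRV : u ∈ LinearMap.range (Matrix.toEuclideanLin V) := by
    rw [← hUcol]; exact ⟨_, hu.symm⟩
  have huW : u ∈ Wsp := by rw [hWsp]; exact Submodule.mem_sup_left huRV
  have hwW : w ∈ Wsp := by rw [hw]; exact Submodule.sub_mem _ hvW huW
  -- range of B
  have hSVlin : Matrix.toEuclideanLin SV = S.comp (Matrix.toEuclideanLin V) := aux_SV V S SV hSV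
  have hrangeB : LinearMap.range B
      = Submodule.map S (LinearMap.range (Matrix.toEuclideanLin V)) := by
    rw [hUScol, hSVlin, LinearMap.range_comp]
  have hSuB : S u ∈ LinearMap.range B := by
    rw [hrangeB]; exact ⟨u, huRV, rfl⟩
  have hqB : q ∈ LinearMap.range B := ⟨_, hq.symm⟩
  have hqSuB : q - S u ∈ LinearMap.range B := Submodule.sub_mem _ hqB hSuB
  obtain ⟨x, hxRV, hSx⟩ := Submodule.mem_map.mp (hrangeB ▸ hqSuB)
  have hxW : x ∈ Wsp := by rw [hWsp]; exact Submodule.mem_sup_left hxRV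
  have hwx : ⟪w, x⟫ = 0 := hwperp x (by rw [hUcol]; exact hxRV)
  -- Pythagoras
  have huw : ⟪u, w⟫ = 0 := by
    rw [real_inner_comm]; exact hwperp u ⟨_, hu.symm⟩
  have hpyth : ‖u‖ ^ 2 + ‖w‖ ^ 2 = 1 := by
    have hv' : v = u + w := by rw [hw]; abel
    have h := norm_add_sq_real u w
    rw [huw, ← hv', hv] at h
    linarith [h]
  have hule : ‖u‖ ≤ 1 := by
    linarith only [hpyth, sq_nonneg ‖w‖, sq_nonneg (‖u‖ - 1)]
  have hwle : ‖w‖ ≤ 1 := by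
    linarith only [hpyth, sq_nonneg ‖u‖, sq_nonneg (‖w‖ - 1)]
  obtain ⟨hSu1, hSu2⟩ := hS u huW
  -- the key quantity
  have hSw : S w = S v - S u := by rw [hw, map_sub]
  have ht2 : ‖q - S u‖ ^ 2 = ⟪S w, S x⟫ := by
    have h0 : ⟪S v - q, q - S u⟫ = 0 := hrperp _ hqSuB
    have h1 : ⟪q - S u, q - S u⟫ = ⟪S w, q - S u⟫ - ⟪S v - q, q - S u⟫ := by
      rw [hSw, ← inner_sub_left]
      congr 1
      abel
    rw [← real_inner_self_eq_norm_sq, h1, h0, hSx]; ring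
  -- polarization bound
  have hpol : ∀ y, y ∈ Wsp → ⟪w, y⟫ = 0 → ⟪S w, S y⟫ ≤ ε * (‖w‖ ^ 2 + ‖y‖ ^ 2) := by
    intro y hyW hwy
    obtain ⟨hp1, hp2⟩ := hS (w + y) (Submodule.add_mem _ hwW hyW)
    obtain ⟨hm1, hm2⟩ := hS (w - y) (Submodule.sub_mem _ hwW hyW)
    have hplus : ‖w + y‖ ^ 2 = ‖w‖ ^ 2 + ‖y‖ ^ 2 := by rw [norm_add_sq_real, hwy]; ring
    have hminus : ‖w - y‖ ^ 2 = ‖w‖ ^ 2 + ‖y‖ ^ 2 := by rw [norm_sub_sq_real, hwy]; ring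
    have h4 : 4 * ⟪S w, S y⟫ = ‖S (w + y)‖ ^ 2 - ‖S (w - y)‖ ^ 2 := by
      rw [map_add, map_sub, norm_add_sq_real, norm_sub_sq_real]; ring
    have h1e : (0:ℝ) ≤ 1 - ε := by linarith
    have hub : ‖S (w + y)‖ ^ 2 ≤ (1 + ε) ^ 2 * (‖w‖ ^ 2 + ‖y‖ ^ 2) := by
      rw [← hplus]
      have hh := mul_self_le_mul_self (norm_nonneg (S (w + y))) hp2
      nlinarith only [hh]
    have hlb : (1 - ε) ^ 2 * (‖w‖ ^ 2 + ‖y‖ ^ 2) ≤ ‖S (w - y)‖ ^ 2 := by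
      rw [← hminus]
      have hh := mul_self_le_mul_self (mul_nonneg h1e (norm_nonneg (w - y))) hm1
      nlinarith only [hh]
    nlinarith only [hub, hlb, h4]
  -- scaling
  have hkey : ⟪S w, S x⟫ ≤ 2 * ε * ‖w‖ * ‖x‖ := by
    rcases eq_or_ne x 0 with h | hx0
    · rw [h]; simp
    rcases eq_or_ne w 0 with h | hw0
    · rw [h]; simp
    have hxn : 0 < ‖x‖ := norm_pos_iff.mpr hx0
    have hwn : 0 < ‖w‖ := norm_pos_iff.mpr hw0
    set c := ‖w‖ / ‖x‖ with hc
    have hcpos : 0 < c := div_pos hwn hxn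
    have hcxW : (c • x) ∈ Wsp := Submodule.smul_mem _ _ hxW
    have hwcx : ⟪w, c • x⟫ = 0 := by rw [real_inner_smul_right, hwx]; ring
    have h := hpol (c • x) hcxW hwcx
    rw [_root_.map_smul, real_inner_smul_right, norm_smul, Real.norm_eq_abs,
      abs_of_pos hcpos] at h
    have hcx2 : c * ‖x‖ = ‖w‖ := by rw [hc]; field_simp
    have h2 : c * ⟪S w, S x⟫ ≤ c * (2 * ε * ‖w‖ * ‖x‖) := by
      calc c * ⟪S w, S x⟫ ≤ ε * (‖w‖ ^ 2 + (c * ‖x‖) ^ 2) := by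
            linarith [h]
        _ = 2 * ε * ‖w‖ ^ 2 := by rw [hcx2]; ring
        _ = c * (2 * ε * ‖w‖ * ‖x‖) := by rw [show ‖w‖ ^ 2 = ‖w‖ * ‖w‖ from sq ‖w‖ ▸ rfl, ← hcx2]; ring
    exact le_of_mul_le_mul_left h2 hcpos
  -- the distance bound
  set t := ‖q - S u‖ with hT
  have htn : 0 ≤ t := norm_nonneg _
  have hxnn : 0 ≤ ‖x‖ := norm_nonneg _
  have hSxlb : (1 - ε) * ‖x‖ ≤ t := by
    rw [hT, ← hSx]; exact (hS x hxW).1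
  have ht1 : t ^ 2 ≤ 2 * ε * ‖w‖ * ‖x‖ := by rw [hT, ht2]; exact hkey
  have ht : t ≤ 4 * ε * ‖w‖ := by
    have hx2t : ‖x‖ ≤ 2 * t := by
      have hh := mul_nonneg (by linarith only [hε1] : (0:ℝ) ≤ 1/2 - ε) hxnn
      linarith only [hSxlb, hh]
    have h3 : t ^ 2 ≤ 4 * ε * ‖w‖ * t := by
      have hh := mul_le_mul_of_nonneg_left hx2t
        (mul_nonneg (mul_nonneg (by norm_num : (0:ℝ) ≤ 2) hε0) (norm_nonneg w))
      nlinarith only [ht1, hh]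
    rcases eq_or_lt_of_le htn with h0 | h0
    · rw [← h0]; positivity
    · nlinarith only [h3, h0]
  have htri : |‖q‖ - ‖S u‖| ≤ t := by
    rw [hT]; exact abs_norm_sub_norm_le q (S u)
  rw [hnormq, hnormU]
  rw [abs_le] at htri ⊢
  have hwb : 4 * ε * ‖w‖ ≤ 4 * ε := by
    have hh := mul_nonneg hε0 (by linarith only [hwle] : (0:ℝ) ≤ 1 - ‖w‖)
    nlinarith only [hh]
  have hub2 : ε * ‖u‖ ≤ ε := by
    have hh := mul_nonneg hε0 (by linarith only [hule] : (0:ℝ) ≤ 1 - ‖u‖)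
    nlinarith only [hh]
  constructor <;>
    linarith only [htri.1, htri.2, hSu1, hSu2, ht, hwb, hub2, norm_nonneg u, hε0]
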